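/- Fix n, phases η_x, φ_x ∈ [0, 2π) and nonnegative reals ψ_x with ∑_x ψ_x = 1, indexed by n-bit strings x. For each n-bit string z define the 2^n × 2^n matrix K_z = ∑_x e^{−i(φ_x − η_{q(z,x)})} √ψ_x |x⟩⟨q(z,x)|, where q(z,x) = z ⊕ x (bitwise XOR). Then: (a) ∑_z K_z† K_z = I; (b) each K_z maps the uniform superposition |+⟩ = 2^{−n/2} ∑_y e^{−iη_y}|y⟩ to 2^{−n/2} |ψ⟩ where |ψ⟩ = ∑_x e^{−iφ_x} √ψ_x |x⟩; hence ∑_z K_z |+⟩⟨+| K_z† = |ψ⟩⟨ψ|. -/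

import Mathlib

open scoped Matrix

/-- Explicit SHP channel transforming the uniform superposition state into an arbitrary
pure state (Proposition 4 of the paper). -/
theorem uniform_superposition_golden_state (n : ℕ)
    (η φ : (Fin n → Bool) → ℝ)
    (hη : ∀ x, η x ∈ Set.Ico (0 : ℝ) (2 * Real.pi))
    (hφ : ∀ x, φ x ∈ Set.Ico (0 : ℝ) (2 * Real.pi))
    (ψ : (Fin n → Bool) → ℝ) (hψ : ∀ x, 0 ≤ ψ x) (hψ1 : ∑ x, ψ x = 1)
    (q : (Fin n → Bool) → (Fin n → Bool) → (Fin n → Bool))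
    (hq : ∀ z x, q z x = fun m => xor (z m) (x m))
    (K : (Fin n → Bool) → Matrix (Fin n → Bool) (Fin n → Bool) ℂ)
    (hK : ∀ z, K z = ∑ x : Fin n → Bool,
      (Complex.exp (-(↑(φ x - η (q z x)) * Complex.I)) * (Real.sqrt (ψ x) : ℂ)) •
        Matrix.single x (q z x) 1)
    (plus : (Fin n → Bool) → ℂ)
    (hplus : ∀ y, plus y = ((Real.sqrt (2 ^ n))⁻¹ : ℝ) * Complex.exp (-(↑(η y) * Complex.I)))
    (ψvec : (Fin n → Bool) → ℂ)
    (hψvec : ∀ x, ψvec x = Complex.exp (-(↑(φ x) * Complex.I)) * (Real.sqrt (ψ x) : ℂ)) :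
    (∑ z : Fin n → Bool, (K z)ᴴ * K z = 1) ∧
    (∀ z : Fin n → Bool, (K z).mulVec plus = ((Real.sqrt (2 ^ n))⁻¹ : ℝ) • ψvec) ∧
    (∑ z : Fin n → Bool, K z * Matrix.vecMulVec plus (star ∘ plus) * (K z)ᴴ
      = Matrix.vecMulVec ψvec (star ∘ ψvec)) := by
  have hqq : ∀ z a, q z (q z a) = a := by
    intro z a; funext m; simp [hq]
  -- entry formula
  have hKe : ∀ z a b, K z a b =
      if b = q z a then Complex.exp (-(↑(φ a - η (q z a)) * Complex.I)) * (Real.sqrt (ψ a) : ℂ)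
      else 0 := by
    intro z a b
    rw [hK]
    simp only [Matrix.sum_apply, Matrix.smul_apply, Matrix.single, Matrix.of_apply,
      ite_and, smul_eq_mul, mul_ite, mul_one, mul_zero]
    rw [Finset.sum_ite_eq' Finset.univ a]
    simp [eq_comm]
  -- star of the exponential
  have hstar : ∀ r : ℝ, star (Complex.exp (-(↑r * Complex.I))) = Complex.exp (↑r * Complex.I) := by
    intro r
    rw [show (star (Complex.exp (-(↑r * Complex.I))) : ℂ)
        = (starRingEnd ℂ) (Complex.exp (-(↑r * Complex.I))) from rfl,
      ← Complex.exp_conj]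
    congr 1
    simp [Complex.conj_I]
  -- part b
  have hb : ∀ z : Fin n → Bool, (K z).mulVec plus = ((Real.sqrt (2 ^ n))⁻¹ : ℝ) • ψvec := by
    intro z
    funext a
    simp only [Matrix.mulVec, dotProduct, hKe, hplus, ite_mul, zero_mul]
    rw [Finset.sum_ite_eq' Finset.univ (q z a)]
    simp only [Finset.mem_univ, if_true, hψvec, Pi.smul_apply, Complex.real_smul]
    have hexp : ∀ u v : ℝ, Complex.exp (-((↑u - ↑v) * Complex.I)) *
        Complex.exp (-(↑v * Complex.I)) = Complex.exp (-(↑u * Complex.I)) := by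
      intro u v; rw [← Complex.exp_add]; ring_nf
    push_cast
    linear_combination ((Real.sqrt (ψ a) : ℂ) * (((Real.sqrt (2 ^ n) : ℝ) : ℂ))⁻¹) *
      hexp (φ a) (η (q z a))
  constructor
  · -- part a
    funext a b
    rw [Matrix.sum_apply]
    have key : ∀ z, ((K z)ᴴ * K z) a b = if a = b then ((ψ (q z a) : ℂ)) else 0 := by
      intro z
      simp only [Matrix.mul_apply, Matrix.conjTranspose_apply, hKe]
      rw [Finset.sum_eq_single (q z a)]
      · rw [hqq, if_pos rfl]
        rcases eq_or_ne a b with rfl | hab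
        · rw [if_pos rfl, if_pos rfl, star_mul', hstar, Complex.star_def, Complex.conj_ofReal]
          have hee : ∀ w : ℂ, Complex.exp w * Complex.exp (-w) = 1 := fun w => by
            rw [← Complex.exp_add, add_neg_cancel, Complex.exp_zero]
          have hss : (Real.sqrt (ψ (q z a)) : ℂ) * (Real.sqrt (ψ (q z a)) : ℂ)
              = (ψ (q z a) : ℂ) := by
            rw [← Complex.ofReal_mul, Real.mul_self_sqrt (hψ _)]
          linear_combination ((Real.sqrt (ψ (q z a)) : ℂ) * (Real.sqrt (ψ (q z a)) : ℂ)) *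
            hee (↑(φ (q z a) - η a) * Complex.I) + hss
        · rw [if_neg (fun h => hab h.symm), if_neg hab, mul_zero]
      · intro c _ hc
        rw [if_neg, star_zero, zero_mul]
        intro h; exact hc (by rw [h, hqq])
      · simp
    simp only [key]
    rcases eq_or_ne a b with rfl | hab
    · simp only [if_pos rfl, Matrix.one_apply_eq]
      have hinv : Function.Involutive (fun z => q z a) := by
        intro z; funext m; simp [hq]
      rw [Fintype.sum_equiv (hinv.toPerm _) _ (fun z => (ψ z : ℂ)) (fun z => by
        simp [Function.Involutive.toPerm])]
      rw [← Complex.ofReal_sum, hψ1, Complex.ofReal_one]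
    · simp [hab, Matrix.one_apply_ne hab]
  refine ⟨hb, ?_⟩
  -- part c
  have hcard : Fintype.card (Fin n → Bool) = 2 ^ n := by simp
  have hentry : ∀ z a b, (K z * Matrix.vecMulVec plus (star ∘ plus) * (K z)ᴴ) a b
      = ((K z).mulVec plus a) * star ((K z).mulVec plus b) := by
    intro z a b
    have h1 : ∀ c, (K z * Matrix.vecMulVec plus (star ∘ plus)) a c
        = ((K z).mulVec plus a) * star (plus c) := by
      intro c
      simp only [Matrix.mul_apply, Matrix.vecMulVec_apply, Matrix.mulVec, dotProduct,
        Function.comp_apply, Finset.sum_mul]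
      exact Finset.sum_congr rfl (fun d _ => by ring)
    simp only [Matrix.mul_apply, h1, Matrix.conjTranspose_apply, Matrix.mulVec,
      dotProduct, star_sum, star_mul', Finset.mul_sum]
    exact Finset.sum_congr rfl (fun c _ => by ring)
  funext a b
  rw [Matrix.sum_apply]
  simp only [hentry, hb, Pi.smul_apply]
  rw [Finset.sum_const, Finset.card_univ, hcard, nsmul_eq_mul]
  simp only [Matrix.vecMulVec_apply, Function.comp_apply, Complex.real_smul, star_mul',
    Complex.star_def, Complex.conj_ofReal]
  have h1 : ((2 : ℂ) ^ n) * ((((Real.sqrt (2 ^ n))⁻¹ : ℝ) : ℂ) *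
      (((Real.sqrt (2 ^ n))⁻¹ : ℝ) : ℂ)) = 1 := by
    rw [← Complex.ofReal_mul, ← mul_inv, Real.mul_self_sqrt (by positivity)]
    push_cast
    exact mul_inv_cancel₀ (pow_ne_zero _ two_ne_zero)
  push_cast
  push_cast at h1
  linear_combination (ψvec a * (starRingEnd ℂ) (ψvec b)) * h1
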